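/- arXiv:1409.1107 — 8 statements merged into one kernel-verified Lean document; each statement's English description precedes it below -/
import Mathlib

section
/- Define S_{G,E} = {(α, g, β) ∈ E* × G × E* : d(α) = g·d(β)} ∪ {0} with multiplication: (α,g,β)(γ,h,δ) = (α·(g·ε), φ(g,ε)h, δ) if γ = βε; = (α, g·φ(h⁻¹,ε)⁻¹, δ·(h⁻¹·ε)) if β = γε; and 0 otherwise; with involution (α,g,β)* = (β, g⁻¹, α). Then for every nonzero element y = (α,g,β), y·y*·y = y. -/
/-- A self-similar structure on the finite path space of a directed graph:
`P` is the set of finite paths `E*`, `V` the vertices, and a group `G` acts on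
paths by length-preserving bijections together with a one-cocycle `coc` (φ),
satisfying the relations (2.5) of Exel–Pardo.  `comp α β` is the concatenation
`αβ` (meaningful when `src α = rng β`), `vert x` is the length-zero path at the
vertex `x`, `vact` is the induced action on vertices. -/
structure SSG (G V P : Type*) [Group G] where
  len : P → ℕ
  src : P → V
  rng : P → V
  comp : P → P → P
  vert : V → P
  vact : G → V → V
  act : G → P → P
  coc : G → P → G
  len_vert : ∀ x, len (vert x) = 0
  src_vert : ∀ x, src (vert x) = x
  rng_vert : ∀ x, rng (vert x) = x
  eq_vert_of_len_zero : ∀ p, len p = 0 → p = vert (src p)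
  len_comp : ∀ α β, src α = rng β → len (comp α β) = len α + len β
  src_comp : ∀ α β, src α = rng β → src (comp α β) = src β
  rng_comp : ∀ α β, src α = rng β → rng (comp α β) = rng α
  comp_vert_right : ∀ α, comp α (vert (src α)) = α
  comp_vert_left : ∀ β, comp (vert (rng β)) β = β
  comp_assoc : ∀ α β γ, src α = rng β → src β = rng γ →
    comp (comp α β) γ = comp α (comp β γ)
  comp_inj : ∀ α β α' β', src α = rng β → src α' = rng β' → len α = len α' →
    comp α β = comp α' β' → α = α' ∧ β = β'
  decomp : ∀ p, 1 ≤ len p → ∃ e q, len e = 1 ∧ src e = rng q ∧ p = comp e q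
  act_one : ∀ p, act 1 p = p
  act_mul : ∀ g h p, act (g * h) p = act g (act h p)
  vact_one : ∀ x, vact 1 x = x
  vact_mul : ∀ g h x, vact (g * h) x = vact g (vact h x)
  len_act : ∀ g p, len (act g p) = len p
  src_act : ∀ g p, src (act g p) = vact g (src p)
  rng_act : ∀ g p, rng (act g p) = vact g (rng p)
  act_vert : ∀ g x, act g (vert x) = vert (vact g x)
  coc_vert : ∀ g x, coc g (vert x) = g
  coc_mul : ∀ g h p, coc (g * h) p = coc g (act h p) * coc h p
  act_comp : ∀ g α β, src α = rng β →
    act g (comp α β) = comp (act g α) (act (coc g α) β)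
  coc_comp : ∀ g α β, src α = rng β → coc g (comp α β) = coc (coc g α) β
  vact_coc : ∀ g p x, vact (coc g p) x = vact g x

namespace SSG

variable {G V P : Type*} [Group G]

/-- A path is strongly fixed by `g` if `g` fixes it and the cocycle is trivial on it. -/
def StronglyFixed (S : SSG G V P) (g : G) (p : P) : Prop :=
  S.act g p = p ∧ S.coc g p = 1

/-- Pseudo freeness: no nontrivial group element strongly fixes an edge. -/
def PseudoFree (S : SSG G V P) : Prop :=
  ∀ (g : G) (e : P), S.len e = 1 → S.act g e = e → S.coc g e = 1 → g = 1

end SSG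
namespace SSG

variable {G V P : Type*} [Group G]

open scoped Classical in
/-- Multiplication of the inverse semigroup `S_{G,E}`; `none` plays the role of `0`. -/
noncomputable def smul (S : SSG G V P) :
    Option (P × G × P) → Option (P × G × P) → Option (P × G × P)
  | some (α, g, β), some (γ, h, δ) =>
    if h1 : ∃ ε, S.src β = S.rng ε ∧ γ = S.comp β ε then
      some (S.comp α (S.act g h1.choose), S.coc g h1.choose * h, δ)
    else if h2 : ∃ ε, S.src γ = S.rng ε ∧ β = S.comp γ ε then
      some (α, g * (S.coc h⁻¹ h2.choose)⁻¹, S.comp δ (S.act h⁻¹ h2.choose))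
    else none
  | _, _ => none

/-- The involution of `S_{G,E}`. -/
def sstar (_S : SSG G V P) : Option (P × G × P) → Option (P × G × P)
  | some (α, g, β) => some (β, g⁻¹, α)
  | none => none

/-- Membership in `S_{G,E}`: the defining condition `d α = g • d β`. -/
def Mem (S : SSG G V P) : Option (P × G × P) → Prop
  | some (α, g, β) => S.src α = S.vact g (S.src β)
  | none => True

end SSG

private lemma choose_eq_vert {G V P : Type*} [Group G] (S : SSG G V P) (β : P)
    (h1 : ∃ ε, S.src β = S.rng ε ∧ β = S.comp β ε) : h1.choose = S.vert (S.src β) := by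
  obtain ⟨h2, h3⟩ := h1.choose_spec
  have := S.comp_inj β h1.choose β (S.vert (S.src β)) h2 (S.rng_vert _).symm rfl
    (by rw [← h3, S.comp_vert_right])
  exact this.2

private lemma coc_one' {G V P : Type*} [Group G] (S : SSG G V P) (p : P) : S.coc 1 p = 1 := by
  have := S.coc_mul 1 1 p
  rw [one_mul, S.act_one] at this
  exact (mul_left_cancel (a := S.coc 1 p) (by rw [mul_one, ← this])).symm

/-- In `S_{G,E}` (with `0 = none` and the multiplication and involution of
Definition 4.1), every nonzero element `y = (α, g, β)` satisfies `y·y*·y = y`. -/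
theorem stmt5 {G V P : Type*} [Group G] (S : SSG G V P) (α β : P) (g : G)
    (hmem : S.src α = S.vact g (S.src β)) :
    S.smul (S.smul (some (α, g, β)) (S.sstar (some (α, g, β)))) (some (α, g, β))
      = some (α, g, β) := by
  have hex : ∀ γ : P, ∃ ε, S.src γ = S.rng ε ∧ γ = S.comp γ ε := fun γ =>
    ⟨S.vert (S.src γ), (S.rng_vert _).symm, (S.comp_vert_right γ).symm⟩
  have step1 : S.smul (some (α, g, β)) (S.sstar (some (α, g, β))) = some (α, 1, α) := by
    show S.smul (some (α, g, β)) (some (β, g⁻¹, α)) = _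
    rw [SSG.smul, dif_pos (hex β), choose_eq_vert S β (hex β)]
    rw [S.act_vert, ← hmem, S.comp_vert_right, S.coc_vert, mul_inv_cancel]
  rw [step1, SSG.smul, dif_pos (hex α), choose_eq_vert S α (hex α)]
  rw [S.act_vert, S.vact_one, S.comp_vert_right, S.coc_vert, one_mul]
end

section
/- Let (α, g, β) be a nonzero element of S_{G,E} and (γ, 1, γ) a nonzero idempotent. Then (γ, 1, γ) ≤ (α, g, β) in the natural order (i.e., (α,g,β)·(γ,1,γ) = (γ,1,γ)) if and only if: α = β, γ = ατ for some finite path τ, and τ is strongly fixed by g (g·τ = τ and φ(g,τ) = 1). -/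
/-- For a nonzero `s = (α, g, β)` in `S_{G,E}` and a nonzero idempotent `e = (γ, 1, γ)`,
one has `e ≤ s` (i.e. `s·e = e`) if and only if `α = β`, `γ = ατ` for some finite path
`τ`, and `τ` is strongly fixed by `g` (`g·τ = τ` and `φ(g, τ) = 1`). -/
theorem stmt9 {G V P : Type*} [Group G] (S : SSG G V P) (α β γ : P) (g : G)
    (hmem : S.src α = S.vact g (S.src β)) :
    S.smul (some (α, g, β)) (some (γ, (1 : G), γ)) = some (γ, (1 : G), γ) ↔
      α = β ∧ ∃ τ, S.src α = S.rng τ ∧ γ = S.comp α τ ∧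
        S.act g τ = τ ∧ S.coc g τ = 1 := by
  classical
  simp only [SSG.smul]
  constructor
  · intro h
    by_cases h1 : ∃ ε, S.src β = S.rng ε ∧ γ = S.comp β ε
    · rw [dif_pos h1] at h
      obtain ⟨hsb, hγ⟩ := h1.choose_spec
      set ε := h1.choose with hε
      injection h with h
      have h1' := congrArg Prod.fst h
      have h2' := congrArg (fun p => p.2.1) h
      simp only [mul_one] at h1' h2'
      -- h1' : comp α (act g ε) = γ, h2' : coc g ε = 1
      have hsrcα : S.src α = S.rng (S.act g ε) := by
        rw [hmem, hsb, S.rng_act]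
      have hlen : S.len α = S.len β := by
        have l1 := S.len_comp α (S.act g ε) hsrcα
        have l2 := S.len_comp β ε hsb
        rw [h1', hγ] at l1
        rw [S.len_act] at l1
        omega
      have := S.comp_inj α (S.act g ε) β ε hsrcα hsb hlen (by rw [h1', hγ])
      obtain ⟨hab, hact⟩ := this
      exact ⟨hab, ε, by rw [hab, hsb], by rw [hab, ← hact, hγ, hact], hact, h2'⟩
    · rw [dif_neg h1] at h
      by_cases h2 : ∃ ε, S.src γ = S.rng ε ∧ β = S.comp γ ε
      · rw [dif_pos h2] at h
        obtain ⟨hsg, hβ⟩ := h2.choose_spec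
        set ε := h2.choose with hε
        injection h with h
        have h3' := congrArg (fun p => p.2.2) h
        simp only at h3'
        -- h3' : comp γ (act 1⁻¹ ε) = γ
        rw [inv_one, S.act_one] at h3'
        have hγv : γ = S.comp γ (S.vert (S.src γ)) := (S.comp_vert_right γ).symm
        have := S.comp_inj γ ε γ (S.vert (S.src γ)) hsg
          (by rw [S.rng_vert]) rfl (by rw [h3', ← hγv])
        have hεv : ε = S.vert (S.src γ) := this.2
        have hβγ : β = γ := by
          rw [hβ, hεv, S.comp_vert_right]
        exact absurd ⟨S.vert (S.src β), by rw [S.rng_vert],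
          by rw [hβγ, ← hβγ, (S.comp_vert_right β)]⟩ h1
      · rw [dif_neg h2] at h
        exact absurd h (by simp)
  · rintro ⟨rfl, τ, hsrc, hγ, hact, hcoc⟩
    have h1 : ∃ ε, S.src α = S.rng ε ∧ γ = S.comp α ε := ⟨τ, hsrc, hγ⟩
    rw [dif_pos h1]
    obtain ⟨hs', hγ'⟩ := h1.choose_spec
    have hετ : h1.choose = τ :=
      (S.comp_inj α h1.choose α τ hs' hsrc rfl (by rw [← hγ', ← hγ])).2
    rw [hετ, hact, hcoc, ← hγ, one_mul]
end

section
/- The inverse semigroup S_{G,E} is E*-unitary (i.e., every element dominating a nonzero idempotent is itself idempotent) if and only if the triple (G, E, φ) is pseudo free. -/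
namespace SSG

variable {G V P : Type*} [Group G] (S : SSG G V P)

lemma coc_one (p : P) : S.coc 1 p = 1 := by
  have h := S.coc_mul 1 1 p
  rw [one_mul, S.act_one] at h
  exact (left_eq_mul.mp h)

lemma comp_right_inj {α ε ε' : P} (hε : S.src α = S.rng ε) (hε' : S.src α = S.rng ε')
    (h : S.comp α ε = S.comp α ε') : ε = ε' :=
  (S.comp_inj α ε α ε' hε hε' rfl h).2

lemma vact_fix {g : G} {p : P} (hc : S.coc g p = 1) (x : V) : S.vact g x = x := by
  rw [← S.vact_coc g p x, hc, S.vact_one]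

lemma smul_eq₁ (α β γ δ : P) (g h : G) (ε : P)
    (hε : S.src β = S.rng ε) (hγ : γ = S.comp β ε) :
    S.smul (some (α, g, β)) (some (γ, h, δ)) =
      some (S.comp α (S.act g ε), S.coc g ε * h, δ) := by
  have h1 : ∃ ε, S.src β = S.rng ε ∧ γ = S.comp β ε := ⟨ε, hε, hγ⟩
  have hch : h1.choose = ε := by
    obtain ⟨hc1, hc2⟩ := h1.choose_spec
    exact S.comp_right_inj hc1 hε (by rw [← hc2, hγ])
  simp only [SSG.smul, dif_pos h1, hch]

lemma smul_eq₂ (α β γ δ : P) (g h : G)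
    (hn : ¬ ∃ ε, S.src β = S.rng ε ∧ γ = S.comp β ε) (ε : P)
    (hε : S.src γ = S.rng ε) (hβ : β = S.comp γ ε) :
    S.smul (some (α, g, β)) (some (γ, h, δ)) =
      some (α, g * (S.coc h⁻¹ ε)⁻¹, S.comp δ (S.act h⁻¹ ε)) := by
  have h2 : ∃ ε, S.src γ = S.rng ε ∧ β = S.comp γ ε := ⟨ε, hε, hβ⟩
  have hch : h2.choose = ε := by
    obtain ⟨hc1, hc2⟩ := h2.choose_spec
    exact S.comp_right_inj hc1 hε (by rw [← hc2, hβ])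
  simp only [SSG.smul, dif_neg hn, dif_pos h2, hch]

lemma smul_eq₀ (α β γ δ : P) (g h : G)
    (hn1 : ¬ ∃ ε, S.src β = S.rng ε ∧ γ = S.comp β ε)
    (hn2 : ¬ ∃ ε, S.src γ = S.rng ε ∧ β = S.comp γ ε) :
    S.smul (some (α, g, β)) (some (γ, h, δ)) = none := by
  simp only [SSG.smul, dif_neg hn1, dif_neg hn2]

lemma smul_none_left (x : Option (P × G × P)) : S.smul none x = none := by
  cases x <;> simp only [SSG.smul]

lemma smul_idem (γ : P) :
    S.smul (some (γ, (1 : G), γ)) (some (γ, (1 : G), γ)) = some (γ, (1 : G), γ) := by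
  rw [S.smul_eq₁ γ γ γ γ 1 1 (S.vert (S.src γ)) (S.rng_vert _).symm
    (S.comp_vert_right γ).symm]
  rw [S.act_one, S.comp_vert_right, S.coc_vert, one_mul]

lemma pf_aux (hPF : S.PseudoFree) :
    ∀ (n : ℕ) (g : G) (p : P), S.len p = n + 1 → S.act g p = p → S.coc g p = 1 → g = 1 := by
  intro n
  induction n with
  | zero => intro g p hl ha hc; exact hPF g p hl ha hc
  | succ n ih =>
    intro g p hl ha hc
    obtain ⟨e, q, he1, hsr, hpq⟩ := S.decomp p (by omega)
    have hlc := S.len_comp e q hsr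
    have hlq : S.len q = n + 1 := by rw [hpq] at hl; rw [hlc, he1] at hl; omega
    have hsrc : S.src (S.act g e) = S.rng (S.act (S.coc g e) q) := by
      rw [S.src_act, S.rng_act, S.vact_coc, hsr]
    have heq : S.comp (S.act g e) (S.act (S.coc g e) q) = S.comp e q := by
      rw [← S.act_comp g e q hsr, ← hpq, ha, hpq]
    obtain ⟨hge, hgq⟩ := S.comp_inj (S.act g e) (S.act (S.coc g e) q) e q hsrc hsr
      (S.len_act g e) heq
    have hcoc : S.coc (S.coc g e) q = 1 := by
      rw [← S.coc_comp g e q hsr, ← hpq]; exact hc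
    exact hPF g e he1 hge (ih (S.coc g e) q hlq hgq hcoc)

end SSG

/-- `S_{G,E}` is `E*`-unitary (every element dominating a nonzero idempotent is itself
idempotent) if and only if `(G, E, φ)` is pseudo free. -/
theorem stmt10 {G V P : Type*} [Group G] (S : SSG G V P) :
    (∀ s e : Option (P × G × P), S.Mem s → S.Mem e → e ≠ none →
      S.smul e e = e → S.smul s e = e → S.smul s s = s) ↔ S.PseudoFree := by
  constructor
  · -- E*-unitary → pseudo free
    intro hU g e0 hl he hc
    have hv : ∀ x, S.vact g x = x := S.vact_fix hc
    have hMs : S.Mem (some (S.vert (S.rng e0), g, S.vert (S.rng e0))) := by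
      show S.src _ = S.vact g (S.src _)
      rw [hv]
    have hMf : S.Mem (some (e0, (1 : G), e0)) := by
      show S.src e0 = S.vact 1 (S.src e0)
      rw [S.vact_one]
    have hsf : S.smul (some (S.vert (S.rng e0), g, S.vert (S.rng e0)))
        (some (e0, (1 : G), e0)) = some (e0, (1 : G), e0) := by
      rw [S.smul_eq₁ (S.vert (S.rng e0)) (S.vert (S.rng e0)) e0 e0 g 1 e0
        (by rw [S.src_vert]) (S.comp_vert_left e0).symm]
      rw [he, hc, one_mul, S.comp_vert_left]
    have hkey := hU (some (S.vert (S.rng e0), g, S.vert (S.rng e0)))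
      (some (e0, (1 : G), e0)) hMs hMf (by simp) (S.smul_idem e0) hsf
    have hss : S.smul (some (S.vert (S.rng e0), g, S.vert (S.rng e0)))
        (some (S.vert (S.rng e0), g, S.vert (S.rng e0))) =
        some (S.vert (S.rng e0), g * g, S.vert (S.rng e0)) := by
      rw [S.smul_eq₁ (S.vert (S.rng e0)) (S.vert (S.rng e0)) (S.vert (S.rng e0))
        (S.vert (S.rng e0)) g g (S.vert (S.rng e0))
        (by rw [S.src_vert, S.rng_vert])
        (by have hx := S.comp_vert_left (S.vert (S.rng e0))
            rw [S.rng_vert] at hx; exact hx.symm)]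
      rw [S.act_vert, hv, S.coc_vert]
      have hx := S.comp_vert_left (S.vert (S.rng e0))
      rw [S.rng_vert] at hx
      rw [hx]
    rw [hss] at hkey
    simp only [Option.some.injEq, Prod.mk.injEq] at hkey
    exact mul_left_cancel (a := g) (by rw [mul_one]; exact hkey.2.1)
  · -- pseudo free → E*-unitary
    intro hPF s e hMs hMe hne hee hse
    rcases e with _ | ⟨γ, h, δ⟩
    · exact absurd rfl hne
    have hMe' : S.src γ = S.vact h (S.src δ) := hMe
    -- Step 1: the idempotent e is of the form (γ, 1, γ)
    have hstep : h = 1 ∧ γ = δ := by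
      by_cases h1 : ∃ ε, S.src δ = S.rng ε ∧ γ = S.comp δ ε
      · obtain ⟨ε, hε, hγ⟩ := h1
        rw [S.smul_eq₁ γ δ γ δ h h ε hε hγ] at hee
        simp only [Option.some.injEq, Prod.mk.injEq] at hee
        obtain ⟨eq1, eq2, -⟩ := hee
        have hsrc : S.src γ = S.rng (S.act h ε) := by
          rw [S.rng_act, ← hε]; exact hMe'
        have hlen0 : S.len ε = 0 := by
          have hl := S.len_comp γ (S.act h ε) hsrc
          rw [eq1, S.len_act] at hl; omega
        have hεv : ε = S.vert (S.src δ) := by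
          have h2 := S.eq_vert_of_len_zero ε hlen0
          rw [h2]
          congr 1
          rw [← S.rng_vert (S.src ε), ← h2, ← hε]
        have hh : h = 1 := by
          rw [hεv, S.coc_vert] at eq2
          exact mul_left_cancel (a := h) (by rw [mul_one]; exact eq2)
        refine ⟨hh, ?_⟩
        rw [hγ, hεv, S.comp_vert_right]
        
      · by_cases h2 : ∃ ε, S.src γ = S.rng ε ∧ δ = S.comp γ ε
        · obtain ⟨ε, hε, hδ⟩ := h2
          rw [S.smul_eq₂ γ δ γ δ h h h1 ε hε hδ] at hee
          simp only [Option.some.injEq, Prod.mk.injEq] at hee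
          obtain ⟨-, eq2, eq3⟩ := hee
          have hsrc : S.src δ = S.rng (S.act h⁻¹ ε) := by
            rw [S.rng_act, ← hε, hMe', ← S.vact_mul, inv_mul_cancel, S.vact_one]
          have hlen0 : S.len ε = 0 := by
            have hl := S.len_comp δ (S.act h⁻¹ ε) hsrc
            rw [eq3, S.len_act] at hl; omega
          have hεv : ε = S.vert (S.src γ) := by
            have hv2 := S.eq_vert_of_len_zero ε hlen0
            rw [hv2]
            congr 1
            rw [← S.rng_vert (S.src ε), ← hv2, ← hε]
          have hh : h = 1 := by
            rw [hεv, S.coc_vert, inv_inv] at eq2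
            exact mul_left_cancel (a := h) (by rw [mul_one]; exact eq2)
          refine ⟨hh, ?_⟩
          rw [hδ, hεv, S.comp_vert_right]
          
        · rw [S.smul_eq₀ γ δ γ δ h h h1 h2] at hee
          exact absurd hee (by simp)
    obtain ⟨hh1, hδγ⟩ := hstep
    subst hh1; subst hδγ
    -- Step 2: s is nonzero
    rcases s with _ | ⟨α, g, β⟩
    · rw [S.smul_none_left] at hse
      exact absurd hse (by simp)
    have hMs' : S.src α = S.vact g (S.src β) := hMs
    -- Step 3: analyze s * e = e
    by_cases h1 : ∃ ε, S.src β = S.rng ε ∧ γ = S.comp β ε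
    · obtain ⟨ε, hε, hγ⟩ := h1
      rw [S.smul_eq₁ α β γ γ g 1 ε hε hγ] at hse
      simp only [Option.some.injEq, Prod.mk.injEq, mul_one] at hse
      obtain ⟨eq1, eq2, -⟩ := hse
      have hsrc : S.src α = S.rng (S.act g ε) := by
        rw [S.rng_act, ← hε]; exact hMs'
      have hlen : S.len α = S.len β := by
        have l1 := S.len_comp α (S.act g ε) hsrc
        have l2 := S.len_comp β ε hε
        rw [eq1, S.len_act] at l1
        rw [← hγ] at l2
        omega
      obtain ⟨hab, hfix⟩ := S.comp_inj α (S.act g ε) β ε hsrc hε hlen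
        (by rw [eq1, hγ])
      have hg1 : g = 1 := by
        rcases Nat.eq_zero_or_pos (S.len ε) with h0 | hpos
        · rw [S.eq_vert_of_len_zero ε h0, S.coc_vert] at eq2
          exact eq2
        · exact S.pf_aux hPF (S.len ε - 1) g ε (by omega) hfix eq2
      subst hg1
      rw [hab]
      exact S.smul_idem β
    · by_cases h2 : ∃ ε, S.src γ = S.rng ε ∧ β = S.comp γ ε
      · obtain ⟨ε, hε, hβ⟩ := h2
        rw [S.smul_eq₂ α β γ γ g 1 h1 ε hε hβ] at hse
        rw [inv_one, S.coc_one, inv_one, mul_one, S.act_one] at hse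
        simp only [Option.some.injEq, Prod.mk.injEq] at hse
        obtain ⟨eqa, eqg, eqc⟩ := hse
        subst eqa; subst eqg
        rw [← hβ] at eqc
        rw [eqc]
        exact hee
      · rw [S.smul_eq₀ α β γ γ g 1 h1 h2] at hse
        exact absurd hse (by simp)
end

section
/- Let (g, γ) be a G-circuit (γ a path of nonzero length with d(γ) = g·r(γ)). Define recursively γ¹ = γ, g₁ = g, γ^{n+1} = g_n·γ^n, g_{n+1} = φ(g_n, γ^n). Then d(γ^n) = r(γ^{n+1}) for all n ≥ 1, so the infinite concatenation ξ = γ¹γ²γ³⋯ is a well-defined infinite path, and moreover g·ξ = γ²γ³γ⁴⋯. -/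
namespace SSG

variable {G V P : Type*} [Group G]

/-- An infinite path, encoded by its sequence of finite prefixes `ξ n = ξ|_n`:
the `n`-th prefix has length `n`, and each prefix extends the previous one by an edge. -/
def IsInfPath (S : SSG G V P) (ξ : ℕ → P) : Prop :=
  (∀ n, S.len (ξ n) = n) ∧
  ∀ n, ∃ e, S.len e = 1 ∧ S.src (ξ n) = S.rng e ∧ ξ (n + 1) = S.comp (ξ n) e

/-- `Phi S g ξ n = φ(g, ξ|_n)`, the sequence of cocycle values along an infinite path
(0-indexed version of the map `Φ` of Definition 8.9). -/
def Phi (S : SSG G V P) (g : G) (ξ : ℕ → P) : ℕ → G := fun n => S.coc g (ξ n)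

/-- The action of `G` on infinite paths, prefixwise: `(g·ξ)|_n = g·(ξ|_n)`. -/
def actInf (S : SSG G V P) (g : G) (ξ : ℕ → P) : ℕ → P := fun n => S.act g (ξ n)

end SSG
namespace SSG

variable {G V P : Type*} [Group G]

/-- The recursive sequence `(γⁿ⁺¹, gₙ₊₁)` attached to a `G`-circuit `(g, γ)`:
`γ¹ = γ`, `g₁ = g`, `γⁿ⁺¹ = gₙ·γⁿ`, `gₙ₊₁ = φ(gₙ, γⁿ)` (0-indexed here). -/
def circSeq (S : SSG G V P) (g : G) (γ : P) : ℕ → P × G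
  | 0 => (γ, g)
  | n + 1 =>
      (S.act (circSeq S g γ n).2 (circSeq S g γ n).1,
       S.coc (circSeq S g γ n).2 (circSeq S g γ n).1)

/-- The partial concatenations `γ¹γ²⋯γⁿ` of the paths attached to a `G`-circuit,
i.e. the prefixes of the infinite path `ξ = γ¹γ²γ³⋯`. -/
def partConcat (S : SSG G V P) (g : G) (γ : P) : ℕ → P
  | 0 => S.vert (S.rng γ)
  | n + 1 => S.comp (partConcat S g γ n) (circSeq S g γ n).1

end SSG

namespace SSG

variable {G V P : Type*} [Group G] (S : SSG G V P)

/-- `α` is a prefix (initial segment on the range side) of `p`. -/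
def IsPref (α p : P) : Prop := ∃ β, S.src α = S.rng β ∧ p = S.comp α β

lemma isPref_exists (p : P) (m : ℕ) (hm : m ≤ S.len p) :
    ∃ α, S.len α = m ∧ S.IsPref α p := by
  induction m with
  | zero =>
      exact ⟨S.vert (S.rng p), S.len_vert _, p, by rw [S.src_vert],
        (S.comp_vert_left p).symm⟩
  | succ m ih =>
      obtain ⟨α, hlα, β, hsr, hp⟩ := ih (le_of_lt hm)
      have hlen : S.len p = m + S.len β := by rw [hp, S.len_comp _ _ hsr, hlα]
      have h1 : 1 ≤ S.len β := by omega
      obtain ⟨e, q, hle, hsq, hβ⟩ := S.decomp β h1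
      have hae : S.src α = S.rng e := by
        rw [hsr, hβ, S.rng_comp _ _ hsq]
      refine ⟨S.comp α e, ?_, q, ?_, ?_⟩
      · rw [S.len_comp _ _ hae, hlα, hle]
      · rw [S.src_comp _ _ hae, hsq]
      · rw [hp, hβ, S.comp_assoc _ _ _ hae hsq]

lemma isPref_unique {α α' p : P} (h : S.IsPref α p) (h' : S.IsPref α' p)
    (hl : S.len α = S.len α') : α = α' := by
  obtain ⟨β, hsr, hp⟩ := h
  obtain ⟨β', hsr', hp'⟩ := h'
  exact (S.comp_inj α β α' β' hsr hsr' hl (hp ▸ hp')).1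

lemma isPref_trans {α q p : P} (h : S.IsPref α q) (h' : S.IsPref q p) :
    S.IsPref α p := by
  obtain ⟨β, hsr, hq⟩ := h
  obtain ⟨δ, hsr', hp⟩ := h'
  have hbd : S.src β = S.rng δ := by
    rw [← hsr']; rw [hq, S.src_comp _ _ hsr]
  refine ⟨S.comp β δ, ?_, ?_⟩
  · rw [S.rng_comp _ _ hbd, hsr]
  · rw [hp, hq, S.comp_assoc _ _ _ hsr hbd]

lemma isPref_of_isPref {α α' p : P} (h : S.IsPref α p) (h' : S.IsPref α' p)
    (hl : S.len α ≤ S.len α') : S.IsPref α α' := by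
  obtain ⟨δ, hδl, hδ⟩ := S.isPref_exists α' (S.len α) hl
  have := S.isPref_unique (S.isPref_trans hδ h') h hδl
  exact this ▸ hδ

variable (g : G) (γ : P)

lemma len_circSeq : ∀ n, S.len (S.circSeq g γ n).1 = S.len γ := by
  intro n
  induction n with
  | zero => rfl
  | succ n ih => rw [circSeq, S.len_act, ih]

lemma src_circSeq (hcirc : S.src γ = S.vact g (S.rng γ)) :
    ∀ n, S.src (S.circSeq g γ n).1
      = S.vact (S.circSeq g γ n).2 (S.rng (S.circSeq g γ n).1) := by
  intro n
  induction n with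
  | zero => exact hcirc
  | succ n ih =>
      show S.src (S.act _ _) = S.vact (S.coc _ _) (S.rng (S.act _ _))
      rw [S.src_act, S.rng_act, ih, S.vact_coc]

lemma src_circSeq_eq_rng (hcirc : S.src γ = S.vact g (S.rng γ)) (n : ℕ) :
    S.src (S.circSeq g γ n).1 = S.rng (S.circSeq g γ (n + 1)).1 := by
  show _ = S.rng (S.act _ _)
  rw [S.rng_act, S.src_circSeq g γ hcirc n]

lemma src_partConcat (hcirc : S.src γ = S.vact g (S.rng γ)) :
    ∀ n, S.src (S.partConcat g γ n) = S.rng (S.circSeq g γ n).1 := by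
  intro n
  induction n with
  | zero => exact S.src_vert _
  | succ n ih =>
      show S.src (S.comp _ _) = _
      rw [S.src_comp _ _ ih, S.src_circSeq_eq_rng g γ hcirc n]

lemma len_partConcat (hcirc : S.src γ = S.vact g (S.rng γ)) :
    ∀ n, S.len (S.partConcat g γ n) = n * S.len γ := by
  intro n
  induction n with
  | zero => simp [partConcat, S.len_vert]
  | succ n ih =>
      show S.len (S.comp _ _) = _
      rw [S.len_comp _ _ (S.src_partConcat g γ hcirc n), ih, S.len_circSeq]
      ring

lemma isPref_partConcat_succ (hcirc : S.src γ = S.vact g (S.rng γ)) (n : ℕ) :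
    S.IsPref (S.partConcat g γ n) (S.partConcat g γ (n + 1)) :=
  ⟨(S.circSeq g γ n).1, S.src_partConcat g γ hcirc n, rfl⟩

lemma isPref_partConcat (hcirc : S.src γ = S.vact g (S.rng γ)) {n m : ℕ}
    (h : n ≤ m) : S.IsPref (S.partConcat g γ n) (S.partConcat g γ m) := by
  induction m, h using Nat.le_induction with
  | base =>
      exact ⟨S.vert (S.src (S.partConcat g γ n)), (S.rng_vert _).symm,
        (S.comp_vert_right _).symm⟩
  | succ m hm ih =>
      exact S.isPref_trans ih (S.isPref_partConcat_succ g γ hcirc m)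

lemma coc_partConcat (hcirc : S.src γ = S.vact g (S.rng γ)) :
    ∀ n, S.coc g (S.partConcat g γ n) = (S.circSeq g γ n).2 := by
  intro n
  induction n with
  | zero => exact S.coc_vert _ _
  | succ n ih =>
      show S.coc g (S.comp _ _) = S.coc _ _
      rw [S.coc_comp _ _ _ (S.src_partConcat g γ hcirc n), ih]

lemma circSeq_shift :
    ∀ n, S.circSeq (S.circSeq g γ 1).2 (S.circSeq g γ 1).1 n = S.circSeq g γ (n + 1) := by
  intro n
  induction n with
  | zero => rfl
  | succ n ih => rw [circSeq, ih]; rfl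

lemma act_partConcat (hcirc : S.src γ = S.vact g (S.rng γ)) :
    ∀ n, S.act g (S.partConcat g γ n)
      = S.partConcat (S.circSeq g γ 1).2 (S.circSeq g γ 1).1 n := by
  intro n
  induction n with
  | zero =>
      show S.act g (S.vert _) = S.vert (S.rng (S.act g γ))
      rw [S.act_vert, S.rng_act]
  | succ n ih =>
      show S.act g (S.comp _ _) = S.comp _ _
      rw [S.act_comp _ _ _ (S.src_partConcat g γ hcirc n), ih,
        S.coc_partConcat g γ hcirc n, S.circSeq_shift g γ n]
      rfl

end SSG

/-- Given a `G`-circuit `(g, γ)` (a path `γ` of nonzero length with `d(γ) = g·r(γ)`),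
with the recursively defined sequences `γ¹ = γ`, `g₁ = g`, `γⁿ⁺¹ = gₙ·γⁿ`,
`gₙ₊₁ = φ(gₙ, γⁿ)`: one has `d(γⁿ) = r(γⁿ⁺¹)` for all `n`, the infinite concatenation
`ξ = γ¹γ²γ³⋯` is a well-defined infinite path (whose prefix of length `n·|γ|` is
`γ¹⋯γⁿ`), and `g·ξ = γ²γ³γ⁴⋯`. -/
theorem stmt15 {G V P : Type*} [Group G] (S : SSG G V P) (g : G) (γ : P)
    (hlen : 1 ≤ S.len γ) (hcirc : S.src γ = S.vact g (S.rng γ)) :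
    (∀ n, S.src (S.circSeq g γ n).1 = S.rng (S.circSeq g γ (n + 1)).1) ∧
    (∃ ξ : ℕ → P, S.IsInfPath ξ ∧ ∀ n, ξ (n * S.len γ) = S.partConcat g γ n) ∧
    (∀ n, S.act g (S.partConcat g γ n) =
      S.partConcat (S.circSeq g γ 1).2 (S.circSeq g γ 1).1 n) := by
  refine ⟨S.src_circSeq_eq_rng g γ hcirc, ?_, S.act_partConcat g γ hcirc⟩
  -- prefixes: for each k, choose the length-k prefix of partConcat k
  have hk : ∀ k : ℕ, k ≤ S.len (S.partConcat g γ k) := by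
    intro k
    rw [S.len_partConcat g γ hcirc k]
    calc k = k * 1 := (mul_one k).symm
    _ ≤ k * S.len γ := Nat.mul_le_mul_left k hlen
  choose ξ hξlen hξpref using fun k => S.isPref_exists (S.partConcat g γ k) k (hk k)
  have hξP : ∀ {k m : ℕ}, k ≤ m → S.IsPref (ξ k) (S.partConcat g γ m) := by
    intro k m h
    exact S.isPref_trans (hξpref k) (S.isPref_partConcat g γ hcirc h)
  refine ⟨ξ, ⟨hξlen, ?_⟩, ?_⟩
  · intro n
    have h1 : S.IsPref (ξ n) (ξ (n + 1)) := by
      have h2 : S.IsPref (ξ n) (S.partConcat g γ (n + 1)) := hξP (Nat.le_succ n)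
      exact S.isPref_of_isPref h2 (hξpref (n + 1))
        (by rw [hξlen, hξlen]; exact Nat.le_succ n)
    obtain ⟨e, hsr, he⟩ := h1
    refine ⟨e, ?_, hsr, he⟩
    have := hξlen (n + 1)
    rw [he, S.len_comp _ _ hsr, hξlen] at this
    omega
  · intro n
    refine S.isPref_unique (hξpref (n * S.len γ)) ?_ ?_
    · obtain ⟨β, h1, h2⟩ := S.isPref_partConcat g γ hcirc
        (show n ≤ n * S.len γ from le_trans (le_of_eq (mul_one n).symm)
          (Nat.mul_le_mul_left n hlen))
      exact ⟨β, h1, h2⟩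
    · rw [hξlen, S.len_partConcat g γ hcirc]
end

section
/- Let E be a finite graph and suppose every circuit in E has an entry (for every circuit γ = γ₁⋯γ_n, some vertex d(γ_i) receives more than one edge). Then every G-circuit has an entry: for every pair (g, γ) with d(γ) = g·r(γ) and |γ| ≥ 1, the path γ has an entry. -/
namespace SSG

variable {G V P : Type*} [Group G]

/-- A vertex `x` is simple if `r⁻¹(x)` is a singleton, i.e. there is at most one edge
with range `x`. -/
def SimpleVert (S : SSG G V P) (x : V) : Prop :=
  ∀ e e', S.len e = 1 → S.len e' = 1 → S.rng e = x → S.rng e' = x → e = e'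

/-- A path `γ = γ₁⋯γ_n` has an entry if `d(γ_i)` is not simple for some `i`,
equivalently some prefix `δ` of `γ` of nonzero length has non-simple source. -/
def HasEntry (S : SSG G V P) (γ : P) : Prop :=
  ∃ δ ε, 1 ≤ S.len δ ∧ S.src δ = S.rng ε ∧ γ = S.comp δ ε ∧ ¬ S.SimpleVert (S.src δ)

end SSG

namespace SSG

variable {G V P : Type*} [Group G] (S : SSG G V P)

lemma act_inj (g : G) {p q : P} (h : S.act g p = S.act g q) : p = q := by
  have h2 := congrArg (S.act g⁻¹) h
  rwa [← S.act_mul, ← S.act_mul, inv_mul_cancel, S.act_one, S.act_one] at h2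

lemma vact_inj (g : G) {x y : V} (h : S.vact g x = S.vact g y) : x = y := by
  have h2 := congrArg (S.vact g⁻¹) h
  rwa [← S.vact_mul, ← S.vact_mul, inv_mul_cancel, S.vact_one, S.vact_one] at h2

lemma simple_of_simple_vact (g : G) (x : V) (h : S.SimpleVert (S.vact g x)) :
    S.SimpleVert x := by
  intro e e' he he' hr hr'
  refine S.act_inj g (h (S.act g e) (S.act g e') ?_ ?_ ?_ ?_) <;>
    simp [S.len_act, S.rng_act, he, he', hr, hr']

lemma prefix_exists : ∀ (l : ℕ) (p : P), l ≤ S.len p →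
    ∃ a b, S.len a = l ∧ S.src a = S.rng b ∧ p = S.comp a b := by
  intro l
  induction l with
  | zero =>
    intro p _
    exact ⟨S.vert (S.rng p), p, S.len_vert _, by rw [S.src_vert],
      (S.comp_vert_left p).symm⟩
  | succ l ih =>
    intro p hl
    obtain ⟨e, q, he1, heq, hpq⟩ := S.decomp p (le_trans (Nat.le_add_left 1 l) hl)
    have hlenp : S.len p = 1 + S.len q := by rw [hpq, S.len_comp _ _ heq, he1]
    have hlq : l ≤ S.len q := by omega
    obtain ⟨a, b, ha1, ha2, hab⟩ := ih q hlq
    have hea : S.src e = S.rng a := by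
      rw [heq, hab, S.rng_comp _ _ ha2]
    have hsb : S.src a = S.rng b := ha2
    refine ⟨S.comp e a, b, ?_, ?_, ?_⟩
    · rw [S.len_comp _ _ hea, he1, ha1, Nat.add_comm]
    · rw [S.src_comp _ _ hea]; exact ha2
    · rw [S.comp_assoc _ _ _ hea hsb, ← hab, ← hpq]

lemma entry_act (g : G) (p : P) (h : S.HasEntry p) : S.HasEntry (S.act g p) := by
  obtain ⟨δ, ε, h1, h2, h3, h4⟩ := h
  refine ⟨S.act g δ, S.act (S.coc g δ) ε, ?_, ?_, ?_, ?_⟩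
  · rw [S.len_act]; exact h1
  · rw [S.src_act, S.rng_act, S.vact_coc, h2]
  · rw [h3, S.act_comp _ _ _ h2]
  · intro hs
    rw [S.src_act] at hs
    exact h4 (S.simple_of_simple_vact g _ hs)

lemma entry_of_entry_act (g : G) (p : P) (h : S.HasEntry (S.act g p)) :
    S.HasEntry p := by
  have h2 := S.entry_act g⁻¹ _ h
  rwa [← S.act_mul, inv_mul_cancel, S.act_one] at h2

lemma entry_split (α β : P) (h : S.src α = S.rng β)
    (he : S.HasEntry (S.comp α β)) : S.HasEntry α ∨ S.HasEntry β := by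
  obtain ⟨δ, ε, h1, h2, h3, h4⟩ := he
  by_cases hc : S.len δ ≤ S.len α
  · obtain ⟨a, b, ha1, ha2, hab⟩ := S.prefix_exists (S.len δ) α hc
    have hsb : S.src b = S.rng β := by
      rw [← h, hab, S.src_comp _ _ ha2]
    have key : S.comp a (S.comp b β) = S.comp δ ε := by
      rw [← S.comp_assoc _ _ _ ha2 hsb, ← hab, ← h3]
    obtain ⟨heq, -⟩ := S.comp_inj a (S.comp b β) δ ε
      (by rw [S.rng_comp _ _ hsb]; exact ha2) h2 (ha1.trans rfl) key
    subst heq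
    exact Or.inl ⟨a, b, ha1 ▸ h1, ha2, hab, h4⟩
  · push_neg at hc
    obtain ⟨a, ρ, ha1, ha2, hδ⟩ := S.prefix_exists (S.len α) δ (le_of_lt hc)
    have hsρ : S.src ρ = S.rng ε := by
      rw [← h2, hδ, S.src_comp _ _ ha2]
    have key : S.comp a (S.comp ρ ε) = S.comp α β := by
      rw [← S.comp_assoc _ _ _ ha2 hsρ, ← hδ, ← h3]
    obtain ⟨heq, hβ⟩ := S.comp_inj a (S.comp ρ ε) α β
      (by rw [S.rng_comp _ _ hsρ]; exact ha2) h (ha1.trans rfl) key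
    have hlρ : 1 ≤ S.len ρ := by
      have := S.len_comp a ρ ha2
      rw [← hδ] at this
      omega
    have hsρδ : S.src ρ = S.src δ := by rw [hδ, S.src_comp _ _ ha2]
    exact Or.inr ⟨ρ, ε, hlρ, hsρ, hβ.symm, hsρδ ▸ h4⟩

end SSG

/-- For a finite graph (finitely many paths of each length) with no sources, if every
(ordinary) circuit has an entry, then every `G`-circuit `(g, γ)` (with `|γ| ≥ 1` and
`d(γ) = g·r(γ)`) has an entry. -/
theorem stmt16 {G V P : Type*} [Group G] (S : SSG G V P)
    (hfin : ∀ n : ℕ, {p : P | S.len p = n}.Finite)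
    (hns : ∀ x : V, ∃ e, S.len e = 1 ∧ S.rng e = x)
    (hcirc : ∀ γ : P, 1 ≤ S.len γ → S.src γ = S.rng γ → S.HasEntry γ) :
    ∀ (g : G) (γ : P), 1 ≤ S.len γ → S.src γ = S.vact g (S.rng γ) →
      S.HasEntry γ := by
  intro g γ hlen hsrc
  set x := S.rng γ with hx
  -- pigeonhole to find m ≥ 1 with vact (g^m) x = x
  have hfin0 := hfin 0
  have : Finite {p : P // S.len p = 0} := hfin0
  obtain ⟨i, j, hij, hfeq⟩ := Finite.exists_ne_map_eq_of_infinite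
    (fun k : ℕ => (⟨S.vert (S.vact (g ^ k) x), S.len_vert _⟩ : {p : P // S.len p = 0}))
  have hveq : S.vact (g ^ i) x = S.vact (g ^ j) x := by
    have h2 := congrArg (fun p : {p : P // S.len p = 0} => S.src p.1) hfeq
    simpa [S.src_vert] using h2
  -- wlog i < j
  obtain ⟨i, j, hlt, hveq⟩ : ∃ i j : ℕ, i < j ∧
      S.vact (g ^ i) x = S.vact (g ^ j) x := by
    rcases lt_or_gt_of_ne hij with h | h
    · exact ⟨i, j, h, hveq⟩
    · exact ⟨j, i, h, hveq.symm⟩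
  set m := j - i with hm
  have hm1 : 1 ≤ m := by omega
  have hfix : S.vact (g ^ m) x = x := by
    apply S.vact_inj (g ^ i)
    rw [← S.vact_mul, ← pow_add, show i + m = j by omega]
    exact hveq.symm
  -- the concatenated circuit
  let Q : ℕ → P := fun n => Nat.rec (S.vert x) (fun n q => S.comp q (S.act (g ^ n) γ)) n
  have hQboth : ∀ n, S.src (Q n) = S.vact (g ^ n) x ∧ S.rng (Q n) = x := by
    intro n
    induction n with
    | zero => exact ⟨by simp [Q, S.src_vert, S.vact_one], S.rng_vert x⟩
    | succ n ih =>
      have hside : S.src (Q n) = S.rng (S.act (g ^ n) γ) := by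
        rw [S.rng_act, ← hx, ih.1]
      constructor
      · show S.src (S.comp (Q n) (S.act (g ^ n) γ)) = _
        rw [S.src_comp _ _ hside, S.src_act, hsrc, ← S.vact_mul, ← pow_succ]
      · show S.rng (S.comp (Q n) (S.act (g ^ n) γ)) = x
        rw [S.rng_comp _ _ hside, ih.2]
  have hQsrc : ∀ n, S.src (Q n) = S.vact (g ^ n) x := fun n => (hQboth n).1
  have hQrng : ∀ n, S.rng (Q n) = x := fun n => (hQboth n).2
  have hQcompat : ∀ n, S.src (Q n) = S.rng (S.act (g ^ n) γ) := by
    intro n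
    rw [hQsrc n, S.rng_act, ← hx]
  have hQlen : ∀ n, S.len (Q n) = n * S.len γ := by
    intro n
    induction n with
    | zero => simp [Q, S.len_vert]
    | succ n ih =>
      show S.len (S.comp (Q n) (S.act (g ^ n) γ)) = _
      rw [S.len_comp _ _ (hQcompat n), ih, S.len_act]
      ring
  -- entry transfer
  have htrans : ∀ n, S.HasEntry (Q n) → S.HasEntry γ := by
    intro n
    induction n with
    | zero =>
      rintro ⟨δ, ε, h1, h2, h3, -⟩
      have h0 : S.len (Q 0) = 0 := by simp [Q, S.len_vert]
      rw [h3, S.len_comp _ _ h2] at h0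
      omega
    | succ n ih =>
      intro h
      rcases S.entry_split (Q n) (S.act (g ^ n) γ) (hQcompat n) h with h | h
      · exact ih h
      · exact S.entry_of_entry_act _ _ h
  -- Q m is an ordinary circuit
  apply htrans m
  apply hcirc
  · rw [hQlen m]
    exact Nat.one_le_iff_ne_zero.mpr (by positivity)
  · rw [hQsrc m, hQrng m, hfix]
end

section
/- Let s = (α, g, β) ∈ S_{G,E} with |α| > |β|, acting on infinite paths by (α,g,β)·(βξ) = α·(g·ξ). If ζ is a fixed point of s, then β is a prefix of α, say α = βγ with (g, γ) a G-circuit, and ζ = β·ξ where ξ = γ¹γ²γ³⋯ is the infinite path built from the G-circuit (g, γ) by γ¹ = γ, g₁ = g, γ^{n+1} = g_n·γ^n, g_{n+1} = φ(g_n, γ^n). In particular, s has at most one fixed point. -/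
namespace SSG

variable {G V P : Type*} [Group G]

/-- `ζ` is a fixed point of the element `s = (α, g, β)` of `S_{G,E}` acting on `E^∞`:
`ζ` is an infinite path lying in the cylinder `Z(β)`, say `ζ = βξ`, and
`s·ζ = α(g·ξ) = ζ` (equality of infinite paths expressed via their prefixes). -/
def FixedPt (S : SSG G V P) (α : P) (g : G) (β : P) (ζ : ℕ → P) : Prop :=
  S.IsInfPath ζ ∧ ∃ ξ : ℕ → P, S.IsInfPath ξ ∧ S.src β = S.rng (ξ 0) ∧
    (∀ k, ζ (S.len β + k) = S.comp β (ξ k)) ∧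
    (∀ k, ζ (S.len α + k) = S.comp α (S.act g (ξ k)))

end SSG

namespace SSG

variable {G V P : Type*} [Group G]

section Circ

variable (S : SSG G V P) (g : G) (γ : P)

lemma circ_src (hsrc : S.src γ = S.vact g (S.rng γ)) :
    ∀ n, S.src (S.circSeq g γ n).1 =
      S.vact (S.circSeq g γ n).2 (S.rng (S.circSeq g γ n).1) := by
  intro n
  induction n with
  | zero => exact hsrc
  | succ n ih =>
      simp only [circSeq]
      rw [S.src_act, S.rng_act, S.vact_coc, ih]

lemma pc_src (hsrc : S.src γ = S.vact g (S.rng γ)) :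
    ∀ n, S.src (S.partConcat g γ n) = S.rng (S.circSeq g γ n).1 := by
  intro n
  induction n with
  | zero => exact S.src_vert _
  | succ n ih =>
      simp only [partConcat, circSeq]
      rw [S.src_comp _ _ ih, S.rng_act, circ_src S g γ hsrc n]

lemma pc_rng (hsrc : S.src γ = S.vact g (S.rng γ)) :
    ∀ n, S.rng (S.partConcat g γ n) = S.rng γ := by
  intro n
  induction n with
  | zero => exact S.rng_vert _
  | succ n ih =>
      simp only [partConcat]
      rw [S.rng_comp _ _ (pc_src S g γ hsrc n), ih]

lemma pc_coc (hsrc : S.src γ = S.vact g (S.rng γ)) :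
    ∀ n, S.coc g (S.partConcat g γ n) = (S.circSeq g γ n).2 := by
  intro n
  induction n with
  | zero => exact S.coc_vert _ _
  | succ n ih =>
      show S.coc g (S.comp _ _) = _
      rw [S.coc_comp _ _ _ (pc_src S g γ hsrc n), ih]
      rfl

lemma pc_step (hsrc : S.src γ = S.vact g (S.rng γ)) :
    ∀ n, S.comp γ (S.act g (S.partConcat g γ n)) = S.partConcat g γ (n + 1) := by
  intro n
  induction n with
  | zero =>
      show S.comp γ (S.act g (S.vert (S.rng γ))) = S.comp (S.vert (S.rng γ)) γ
      rw [S.act_vert, ← hsrc, S.comp_vert_right, S.comp_vert_left]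
  | succ n ih =>
      have h1 : S.src (S.partConcat g γ n) = S.rng (S.circSeq g γ n).1 :=
        pc_src S g γ hsrc n
      have step : S.comp γ (S.act g (S.partConcat g γ (n + 1)))
          = S.comp (S.comp γ (S.act g (S.partConcat g γ n))) (S.circSeq g γ (n + 1)).1 := by
        have e1 : S.act g (S.partConcat g γ (n + 1))
            = S.comp (S.act g (S.partConcat g γ n)) (S.circSeq g γ (n + 1)).1 := by
          show S.act g (S.comp _ _) = _
          rw [S.act_comp _ _ _ h1, pc_coc S g γ hsrc n]
          rfl
        rw [e1]
        refine (S.comp_assoc _ _ _ ?_ ?_).symm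
        · rw [S.rng_act, pc_rng S g γ hsrc n, ← hsrc]
        · rw [S.src_act, h1]
          simp only [circSeq]
          rw [S.rng_act, ← pc_coc S g γ hsrc n, S.vact_coc]
      rw [step, ih]
      rfl

lemma pc_len (hsrc : S.src γ = S.vact g (S.rng γ)) :
    ∀ n, S.len (S.partConcat g γ n) = n * S.len γ := by
  have hcl : ∀ n, S.len (S.circSeq g γ n).1 = S.len γ := by
    intro n
    induction n with
    | zero => rfl
    | succ n ih => simp only [circSeq]; rw [S.len_act, ih]
  intro n
  induction n with
  | zero => simp only [partConcat, S.len_vert, Nat.zero_mul]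
  | succ n ih =>
      show S.len (S.comp _ _) = _
      rw [S.len_comp _ _ (pc_src S g γ hsrc n), ih, hcl]
      ring

end Circ

lemma inf_prefix (S : SSG G V P) (ζ : ℕ → P) (h : S.IsInfPath ζ) (n : ℕ) :
    ∀ k, ∃ q, S.src (ζ n) = S.rng q ∧ ζ (n + k) = S.comp (ζ n) q := by
  intro k
  induction k with
  | zero =>
      exact ⟨S.vert (S.src (ζ n)), (S.rng_vert _).symm, (S.comp_vert_right _).symm⟩
  | succ k ih =>
      obtain ⟨q, hq1, hq2⟩ := ih
      obtain ⟨e, _, he2, he3⟩ := h.2 (n + k)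
      have hqe : S.src q = S.rng e := by
        rw [hq2, S.src_comp _ _ hq1] at he2; exact he2
      refine ⟨S.comp q e, ?_, ?_⟩
      · rw [S.rng_comp _ _ hqe, ← hq1]
      · rw [show n + (k + 1) = n + k + 1 from rfl, he3, hq2,
          S.comp_assoc _ _ _ hq1 hqe]

lemma main_aux (S : SSG G V P) (α β : P) (g : G)
    (hmem : S.src α = S.vact g (S.src β)) (hlen : S.len β < S.len α)
    (ζ : ℕ → P) (hζ : S.FixedPt α g β ζ) :
    ∃ γ, S.src β = S.rng γ ∧ α = S.comp β γ ∧ 1 ≤ S.len γ ∧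
      S.src γ = S.vact g (S.rng γ) ∧
      ∀ n, ζ (S.len β + n * S.len γ) = S.comp β (S.partConcat g γ n) := by
  obtain ⟨hζinf, ξ, hξinf, hξ0, hβ, hα⟩ := hζ
  set m := S.len α - S.len β with hmdef
  have hm : 1 ≤ m := by omega
  have hms : S.len β + m = S.len α := by omega
  -- range of every prefix of ξ
  have rng_ξ : ∀ n, S.rng (ξ n) = S.src β := by
    intro n
    induction n with
    | zero => exact hξ0.symm
    | succ n ih =>
        obtain ⟨e, _, he2, he3⟩ := hξinf.2 n
        rw [he3, S.rng_comp _ _ he2, ih]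
  -- ξ 0 is the vertex src β
  have hξ00 : ξ 0 = S.vert (S.src β) := by
    have h0 : ξ 0 = S.vert (S.src (ξ 0)) := S.eq_vert_of_len_zero _ (hξinf.1 0)
    have hs0 : S.src (ξ 0) = S.src β := by
      have := rng_ξ 0
      rw [h0, S.rng_vert] at this
      exact this
    rw [h0, hs0]
  set γ := ξ m with hγdef
  have hlenγ : S.len γ = m := hξinf.1 m
  have hrngγ : S.src β = S.rng γ := (rng_ξ m).symm
  -- α = β γ
  have hαβγ : α = S.comp β γ := by
    have e1 : ζ (S.len β + m) = S.comp β γ := hβ m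
    have e2 : ζ (S.len α + 0) = S.comp α (S.act g (ξ 0)) := hα 0
    rw [hξ00, S.act_vert, ← hmem, S.comp_vert_right] at e2
    rw [hms] at e1
    rw [Nat.add_zero] at e2
    rw [← e2]
    exact e1
  have hsrcγ : S.src γ = S.vact g (S.rng γ) := by
    have : S.src α = S.src γ := by rw [hαβγ, S.src_comp _ _ hrngγ]
    rw [← this, hmem, hrngγ]
  -- the key recursion for ξ
  have compat : ∀ k, S.src γ = S.rng (S.act g (ξ k)) := by
    intro k
    rw [S.rng_act, rng_ξ k, hsrcγ, hrngγ]
  have key : ∀ k, ξ (m + k) = S.comp γ (S.act g (ξ k)) := by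
    intro k
    have e3 : ζ (S.len β + (m + k)) = S.comp β (ξ (m + k)) := hβ (m + k)
    have e4 : ζ (S.len α + k) = S.comp β (S.comp γ (S.act g (ξ k))) := by
      rw [hα k, hαβγ, S.comp_assoc _ _ _ hrngγ (compat k)]
    have hNk : S.len β + (m + k) = S.len α + k := by omega
    rw [hNk, e4] at e3
    exact ((S.comp_inj β _ β _
      (by rw [S.rng_comp _ _ (compat k)]; exact hrngγ)
      ((rng_ξ (m + k)).symm) rfl e3).2).symm
  -- ξ at multiples of m equals the partial concatenations
  have D : ∀ n, ξ (n * m) = S.partConcat g γ n := by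
    intro n
    induction n with
    | zero =>
        simp only [Nat.zero_mul, partConcat]
        rw [hξ00, hrngγ]
    | succ n ih =>
        have : (n + 1) * m = m + n * m := by ring
        rw [this, key (n * m), ih, pc_step S g γ hsrcγ n]
  refine ⟨γ, hrngγ, hαβγ, by omega, hsrcγ, fun n => ?_⟩
  rw [hlenγ, hβ (n * m), D n]

end SSG

/-- Let `s = (α, g, β) ∈ S_{G,E}` with `|α| > |β|`.  If `ζ` is a fixed point of `s`,
then `β` is a prefix of `α`, say `α = βγ` with `(g, γ)` a `G`-circuit, and `ζ = βξ`
where `ξ = γ¹γ²γ³⋯` is the infinite path built from `(g, γ)` by `γ¹ = γ`, `g₁ = g`,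
`γⁿ⁺¹ = gₙ·γⁿ`, `gₙ₊₁ = φ(gₙ, γⁿ)`.  In particular `s` has at most one fixed point. -/
theorem stmt17 {G V P : Type*} [Group G] (S : SSG G V P) (α β : P) (g : G)
    (hmem : S.src α = S.vact g (S.src β)) (hlen : S.len β < S.len α)
    (ζ : ℕ → P) (hζ : S.FixedPt α g β ζ) :
    (∃ γ, S.src β = S.rng γ ∧ α = S.comp β γ ∧ 1 ≤ S.len γ ∧
      S.src γ = S.vact g (S.rng γ) ∧
      ∀ n, ζ (S.len β + n * S.len γ) = S.comp β (S.partConcat g γ n)) ∧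
    (∀ ζ' : ℕ → P, S.FixedPt α g β ζ' → ζ' = ζ) := by
  obtain ⟨γ, h1, h2, h3, h4, h5⟩ := S.main_aux α β g hmem hlen ζ hζ
  refine ⟨⟨γ, h1, h2, h3, h4, h5⟩, fun ζ' hζ' => ?_⟩
  obtain ⟨γ', h1', h2', h3', h4', h5'⟩ := S.main_aux α β g hmem hlen ζ' hζ'
  have hγγ : γ' = γ :=
    (S.comp_inj β γ' β γ h1' h1 rfl (by rw [← h2', ← h2])).2
  rw [hγγ] at h5'
  -- ζ' and ζ agree at the points len β + n * len γ
  have agree : ∀ n, ζ' (S.len β + n * S.len γ) = ζ (S.len β + n * S.len γ) := by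
    intro n; rw [h5 n, h5' n]
  funext n
  have hn : n ≤ S.len β + n * S.len γ := by
    have : n ≤ n * S.len γ := Nat.le_mul_of_pos_right n (by omega)
    omega
  obtain ⟨k, hk⟩ := Nat.exists_eq_add_of_le hn
  obtain ⟨q, hq1, hq2⟩ := S.inf_prefix ζ hζ.1 n k
  obtain ⟨q', hq1', hq2'⟩ := S.inf_prefix ζ' hζ'.1 n k
  have hN := agree n
  rw [hk, hq2, hq2'] at hN
  exact (S.comp_inj _ _ _ _ hq1' hq1
    (by rw [hζ'.1.1 n, hζ.1.1 n]) hN).1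
end

section
/- Let E be the graph determined by matrices A ∈ M_N(ℤ≥0), B ∈ M_N(ℤ) (with A_{ij} edges e_{i,j,n}, 0 ≤ n < A_{ij}, from vertex j to vertex i), and let ℤ act on edges by σ_m(e_{i,j,n}) = e_{i,j,n̂} where m·B_{ij} + n = k̂·A_{ij} + n̂ with 0 ≤ n̂ < A_{ij}, with cocycle φ(m, e_{i,j,n}) = k̂. Then a finite path α = e_{i₁,i₂,n₁}⋯e_{i_r,i_{r+1},n_r} is fixed by l ∈ ℤ (l·α = α) if and only if for every 1 ≤ j ≤ r, the rational number l·(B_{i₁i₂}⋯B_{i_j i_{j+1}})/(A_{i₁i₂}⋯A_{i_j i_{j+1}}) is an integer. -/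
/-- An edge `e_{i,j,n}` (with `0 ≤ n < A_{ij}`) of the graph of the matrix `A`,
going from vertex `j` to vertex `i`. -/
structure KEdge (N : ℕ) (A : Fin N → Fin N → ℤ) where
  i : Fin N
  j : Fin N
  n : ℤ
  hn0 : 0 ≤ n
  hnA : n < A i j

/-- The Katsura action of `m ∈ ℤ` on an edge: `m·e_{i,j,n} = e_{i,j,n̂}` where
`m·B_{ij} + n = k̂·A_{ij} + n̂` with `0 ≤ n̂ < A_{ij}` (Euclidean division). -/
def edgeAct {N : ℕ} (A B : Fin N → Fin N → ℤ) (m : ℤ) (e : KEdge N A) : KEdge N A :=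
  ⟨e.i, e.j, (m * B e.i e.j + e.n) % A e.i e.j,
    Int.emod_nonneg _ (ne_of_gt (lt_of_le_of_lt e.hn0 e.hnA)),
    Int.emod_lt_of_pos _ (lt_of_le_of_lt e.hn0 e.hnA)⟩

/-- The Katsura cocycle: `φ(m, e_{i,j,n}) = k̂`, the quotient of the Euclidean
division of `m·B_{ij} + n` by `A_{ij}`. -/
def edgeCoc {N : ℕ} (A B : Fin N → Fin N → ℤ) (m : ℤ) (e : KEdge N A) : ℤ :=
  (m * B e.i e.j + e.n) / A e.i e.j

/-- The induced action of `m ∈ ℤ` on finite paths (lists of edges), determined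
recursively by `m·(e·α') = (m·e)·(φ(m, e)·α')`. -/
def pathAct {N : ℕ} (A B : Fin N → Fin N → ℤ) : ℤ → List (KEdge N A) → List (KEdge N A)
  | _, [] => []
  | m, e :: l => edgeAct A B m e :: pathAct A B (edgeCoc A B m e) l

lemma edgeAct_eq_iff {N : ℕ} (A B : Fin N → Fin N → ℤ) (m : ℤ) (e : KEdge N A) :
    edgeAct A B m e = e ↔ A e.i e.j ∣ m * B e.i e.j := by
  obtain ⟨i, j, n, hn0, hnA⟩ := e
  simp only [edgeAct, KEdge.mk.injEq, true_and]
  constructor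
  · intro h
    have h2 : (m * B i j + n) % A i j = n % A i j := by
      rw [Int.emod_eq_of_lt hn0 hnA]; exact h
    have h3 := Int.emod_emod_of_dvd
    have := Int.emod_eq_emod_iff_emod_sub_eq_zero.mp h2
    rw [add_sub_cancel_right] at this
    exact Int.dvd_of_emod_eq_zero this
  · rintro ⟨c, hc⟩
    rw [hc, add_comm, Int.add_mul_emod_self_left, Int.emod_eq_of_lt hn0 hnA]

lemma edgeCoc_eq {N : ℕ} (A B : Fin N → Fin N → ℤ) (m : ℤ) (e : KEdge N A)
    (h : A e.i e.j ∣ m * B e.i e.j) :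
    edgeCoc A B m e = m * B e.i e.j / A e.i e.j := by
  have hpos : 0 < A e.i e.j := lt_of_le_of_lt e.hn0 e.hnA
  obtain ⟨c, hc⟩ := h
  rw [edgeCoc, hc, add_comm, Int.add_mul_ediv_left _ _ hpos.ne',
    Int.ediv_eq_zero_of_lt e.hn0 e.hnA, zero_add, Int.mul_ediv_cancel_left _ hpos.ne']

/-- (Lemma 18.4)  In the Katsura setting, a finite path
`α = e_{i₁,i₂,n₁}⋯e_{i_r,i_{r+1},n_r}` is fixed by `l ∈ ℤ` if and only if for every
`1 ≤ j ≤ r` the rational number `l·(B_{i₁i₂}⋯B_{i_j i_{j+1}})/(A_{i₁i₂}⋯A_{i_j i_{j+1}})`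
is an integer, i.e. `A_{i₁i₂}⋯A_{i_j i_{j+1}}` divides `l·B_{i₁i₂}⋯B_{i_j i_{j+1}}`. -/
theorem stmt18 {N : ℕ} (A B : Fin N → Fin N → ℤ)
    (hA : ∀ i j, 0 ≤ A i j)
    (hArow : ∀ i, ∃ j, 1 ≤ A i j)
    (hB : ∀ i j, A i j = 0 → B i j = 0)
    (l : List (KEdge N A)) (hchain : l.Chain' (fun e f => e.j = f.i)) (m : ℤ) :
    pathAct A B m l = l ↔
      ∀ k : ℕ, 1 ≤ k → k ≤ l.length →
        ((l.take k).map (fun e => A e.i e.j)).prod ∣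
          m * ((l.take k).map (fun e => B e.i e.j)).prod := by
  clear hchain hArow hB hA
  induction l generalizing m with
  | nil =>
    simp only [pathAct, List.length_nil, true_iff]
    intro k hk1 hk0
    omega
  | cons e l ih =>
    have hpos : 0 < A e.i e.j := lt_of_le_of_lt e.hn0 e.hnA
    constructor
    · intro h
      rw [pathAct, List.cons.injEq] at h
      obtain ⟨h1, h2⟩ := h
      have hdvd : A e.i e.j ∣ m * B e.i e.j := (edgeAct_eq_iff A B m e).mp h1
      rw [edgeCoc_eq A B m e hdvd] at h2
      have key := (ih _).mp h2
      intro k hk1 hkl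
      match k, hk1 with
      | 1, _ => simpa using hdvd
      | (k+2), _ =>
        have hkl' : k+1 ≤ l.length := by
          simpa using hkl
        have hP := key (k+1) (by omega) hkl'
        simp only [List.take_succ_cons, List.map_cons, List.prod_cons]
        have := mul_dvd_mul_left (A e.i e.j) hP
        rwa [← mul_assoc, Int.mul_ediv_cancel' hdvd, mul_assoc] at this
    · intro h
      have hdvd : A e.i e.j ∣ m * B e.i e.j := by
        simpa using h 1 le_rfl (by simp)
      have h1 : edgeAct A B m e = e := (edgeAct_eq_iff A B m e).mpr hdvd
      have htail : pathAct A B (m * B e.i e.j / A e.i e.j) l = l := by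
        apply (ih _).mpr
        intro k hk1 hkl
        have hh := h (k+1) (by omega) (by simp; omega)
        simp only [List.take_succ_cons, List.map_cons, List.prod_cons] at hh
        rw [show m * (B e.i e.j * ((l.take k).map (fun e => B e.i e.j)).prod)
            = A e.i e.j * ((m * B e.i e.j / A e.i e.j) *
              ((l.take k).map (fun e => B e.i e.j)).prod) by
          rw [← mul_assoc, ← mul_assoc, Int.mul_ediv_cancel' hdvd]] at hh
        exact (mul_dvd_mul_iff_left hpos.ne').mp hh
      rw [pathAct, h1, edgeCoc_eq A B m e hdvd, htail]
end

section
/- In the Katsura setting (ℤ acting on the graph E of A with cocycle φ determined by B via Euclidean division), the triple (ℤ, E, φ) is pseudo free (g·e = e and φ(g,e) = 0 imply g = 0, for edges e) if and only if B_{ij} ≠ 0 whenever A_{ij} ≥ 1. -/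
/-- (Lemma 18.5)  The Katsura triple `(ℤ, E, φ)` is pseudo free (i.e. `m·e = e` and
`φ(m, e) = 0` imply `m = 0`, for every edge `e`) if and only if `B_{ij} ≠ 0`
whenever `A_{ij} ≥ 1`. -/
theorem stmt19 {N : ℕ} (A B : Fin N → Fin N → ℤ)
    (hA : ∀ i j, 0 ≤ A i j)
    (hArow : ∀ i, ∃ j, 1 ≤ A i j)
    (hB : ∀ i j, A i j = 0 → B i j = 0) :
    (∀ (m : ℤ) (e : KEdge N A), edgeAct A B m e = e → edgeCoc A B m e = 0 → m = 0) ↔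
      ∀ i j : Fin N, 1 ≤ A i j → B i j ≠ 0 := by
  constructor
  · intro hpf i j hAij hBij
    have h10 : (1:ℤ) = 0 := hpf 1 ⟨i, j, 0, le_refl 0, hAij⟩
      (by simp [edgeAct, hBij]) (by simp [edgeCoc, hBij])
    exact absurd h10 one_ne_zero
  · intro h m e hact hcoc
    have hApos : 0 < A e.i e.j := lt_of_le_of_lt e.hn0 e.hnA
    have hn : (m * B e.i e.j + e.n) % A e.i e.j = e.n := congrArg KEdge.n hact
    have key := Int.mul_ediv_add_emod (m * B e.i e.j + e.n) (A e.i e.j)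
    rw [show (m * B e.i e.j + e.n) / A e.i e.j = 0 from hcoc, hn, mul_zero, zero_add] at key
    have hmB : m * B e.i e.j = 0 := by linarith
    rcases mul_eq_zero.mp hmB with hm | hb
    · exact hm
    · exact absurd hb (h e.i e.j hApos)
end
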